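/- arXiv:1609.01766 — 2 statements merged into one kernel-verified Lean document; each statement's English description precedes it below -/
import Mathlib

section
/- For each a ∈ I with a > 0: β(u_a) = u_a and β(u_{−a}) = u_{−a} + (v^{L_0} − v^{−L_0})·u_a. Consequently, the ı-canonical basis of V_L is: b_{u_a} = u_a for a > 0, together with b_{u_{−a}} = u_{−a} if L_0 = 0, b_{u_{−a}} = u_{−a} + v^{L_0}·u_a if L_0 > 0, and b_{u_{−a}} = u_{−a} − v^{−L_0}·u_a if L_0 < 0; i.e. in each case b_{u_{−a}} is the unique β-invariant element of the form u_{−a} + (an element of v·ℤ[v]·u_a). -/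
attribute [local instance] Classical.propDecidable

noncomputable section

/-- The field `ℚ(v)`. -/
abbrev Kv : Type := RatFunc ℚ

/-- The indeterminate `v`. -/
noncomputable def vv : Kv := RatFunc.X

/-- The index set `I = {-r-1/2, -r+1/2, ..., r+1/2}` of half-integers, as a subtype of `ℚ`. -/
def HIdx (r : ℕ) : Type := {a : ℚ // ∃ k : ℤ, -(r : ℤ) - 1 ≤ k ∧ k ≤ r ∧ a = (k : ℚ) + 1/2}

instance (r : ℕ) : DecidableEq (HIdx r) := fun a b =>
  decidable_of_iff (a.1 = b.1) Subtype.ext_iff.symm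

/-- Negation on the index set. -/
def HIdx.neg {r : ℕ} (a : HIdx r) : HIdx r :=
  ⟨-a.1, by
    obtain ⟨k, h1, h2, h3⟩ := a.2
    exact ⟨-k - 1, by omega, by omega, by rw [h3]; push_cast; ring⟩⟩

/-- The space `V_L`, the free `ℚ(v)`-module on `I`. -/
abbrev VL (r : ℕ) : Type := HIdx r →₀ Kv

/-- The basis vector `u_a`. -/
noncomputable def uv {r : ℕ} (a : HIdx r) : VL r := Finsupp.single a 1

/-- The Hecke operator `H_0` on `V_L`: `u_a H_0 = u_{-a}` if `a > 0`, and
`u_a H_0 = u_{-a} + (v^{-L_0} - v^{L_0}) u_a` if `a < 0`. -/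
noncomputable def H0L (r : ℕ) (L0 : ℤ) : Module.End Kv (VL r) :=
  Finsupp.lift (VL r) Kv (HIdx r) (fun a =>
    if 0 < a.1 then uv a.neg else uv a.neg + (vv ^ (-L0) - vv ^ L0) • uv a)

/-- The conditions characterizing the bar involution `β` on `V_L`. -/
def betaCondV (r : ℕ) (L0 : ℤ) (bar : Kv →+* Kv) (β : VL r →+ VL r) : Prop :=
  (∀ (c : Kv) (x : VL r), β (c • x) = bar c • β x) ∧
  (∀ a : HIdx r, 0 < a.1 → β (uv a) = uv a) ∧
  (∀ x : VL r, β (H0L r L0 x) = (H0L r L0 + (vv ^ L0 - vv ^ (-L0)) • 1) (β x))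

/-- Membership in `v · ℤ[v] ⊆ ℚ(v)`. -/
def inVZv (c : Kv) : Prop :=
  ∃ P : Polynomial ℤ, c = algebraMap (Polynomial ℚ) Kv (Polynomial.X * P.map (Int.castRingHom ℚ))

/-- The ı-canonical basis vector attached to `u_{-a}` (`a > 0`). -/
noncomputable def canB (r : ℕ) (L0 : ℤ) (a : HIdx r) : VL r :=
  if 0 < L0 then uv a.neg + (vv ^ L0) • uv a
  else if L0 < 0 then uv a.neg - (vv ^ (-L0)) • uv a
  else uv a.neg

/-! ### Auxiliary lemmas -/

lemma vv_ne_zero : vv ≠ 0 := RatFunc.X_ne_zero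

lemma algEval (Q : Polynomial ℚ) :
    algebraMap (Polynomial ℚ) Kv Q = Q.eval₂ (algebraMap ℚ Kv) vv := by
  induction Q using Polynomial.induction_on with
  | C q => simp [RatFunc.algebraMap_C, RatFunc.algebraMap_eq_C]
  | add p q hp hq => simp [map_add, hp, hq]
  | monomial n q h =>
      simp [vv, RatFunc.algebraMap_C, RatFunc.algebraMap_eq_C, RatFunc.algebraMap_X] at *

lemma bar_rat (bar : Kv →+* Kv) (q : ℚ) :
    bar (algebraMap ℚ Kv q) = algebraMap ℚ Kv q := by
  rw [eq_ratCast (algebraMap ℚ Kv) q, map_ratCast]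

lemma bar_alg (bar : Kv →+* Kv) (hbar : bar vv = vv⁻¹) (Q : Polynomial ℚ) :
    bar (algebraMap (Polynomial ℚ) Kv Q) = Q.eval₂ (algebraMap ℚ Kv) vv⁻¹ := by
  induction Q using Polynomial.induction_on with
  | C q =>
      rw [RatFunc.algebraMap_C, ← RatFunc.algebraMap_eq_C, Polynomial.eval₂_C]; exact (congrArg bar (eq_ratCast _ q)).trans ((map_ratCast bar q).trans (eq_ratCast _ q).symm)
  | add p q hp hq => simp [map_add, hp, hq]
  | monomial n q h =>
      have hX : bar ((algebraMap (Polynomial ℚ) Kv) Polynomial.X) = vv⁻¹ := by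
        rw [RatFunc.algebraMap_X]; exact hbar
      simp only [map_mul, map_pow, Polynomial.eval₂_mul, Polynomial.eval₂_pow,
        Polynomial.eval₂_C, Polynomial.eval₂_X] at *
      rw [pow_succ, pow_succ, ← mul_assoc, ← mul_assoc, h, hX]

lemma natDegree_reflect_le {R : Type*} [Semiring R] (N : ℕ) (f : Polynomial R)
    (hf : f.natDegree ≤ N) : (Polynomial.reflect N f).natDegree ≤ N := by
  rw [Polynomial.natDegree_le_iff_coeff_eq_zero]
  intro i hi
  rw [Polynomial.coeff_reflect, Polynomial.revAt_eq_self_of_lt hi]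
  exact Polynomial.coeff_eq_zero_of_natDegree_lt (lt_of_le_of_lt hf hi)

/-- Key injectivity: an element of `v·ℚ[v]` that evaluates the same at `v⁻¹` is zero. -/
lemma key_zero (R : Polynomial ℚ)
    (h : (Polynomial.X * R).eval₂ (algebraMap ℚ Kv) vv⁻¹ =
      algebraMap (Polynomial ℚ) Kv (Polynomial.X * R)) : R = 0 := by
  by_contra hR
  set Q : Polynomial ℚ := Polynomial.X * R with hQ
  have hQ0 : Q ≠ 0 := mul_ne_zero Polynomial.X_ne_zero hR
  set n : ℕ := Q.natDegree with hn
  have hv : vv ≠ 0 := vv_ne_zero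
  have hvi : vv⁻¹ ≠ 0 := inv_ne_zero hv
  letI : Invertible (vv⁻¹) := invertibleOfNonzero hvi
  have hinv : (⅟(vv⁻¹) : Kv) = vv := by
    rw [invOf_eq_inv, inv_inv]
  have hm := Polynomial.eval₂_reflect_mul_pow (algebraMap ℚ Kv) (vv⁻¹) n Q le_rfl
  rw [hinv, ← algEval, h] at hm
  -- hm : algebraMap (reflect n Q) * (vv⁻¹)^n = algebraMap Q
  have hm2 : algebraMap (Polynomial ℚ) Kv (Polynomial.reflect n Q) =
      algebraMap (Polynomial ℚ) Kv (Q * Polynomial.X ^ n) := by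
    have : algebraMap (Polynomial ℚ) Kv (Polynomial.reflect n Q) * (vv⁻¹ ^ n * vv ^ n) =
        algebraMap (Polynomial ℚ) Kv Q * vv ^ n := by
      rw [← mul_assoc, hm]
    rw [inv_pow, inv_mul_cancel₀ (pow_ne_zero n hv), mul_one] at this
    conv_rhs => rw [map_mul, map_pow, RatFunc.algebraMap_X]
    exact this
  have heq : Polynomial.reflect n Q = Q * Polynomial.X ^ n :=
    RatFunc.algebraMap_injective ℚ hm2
  have hd1 : (Polynomial.reflect n Q).natDegree ≤ n := natDegree_reflect_le n Q le_rfl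
  have hd2 : (Q * Polynomial.X ^ n).natDegree = n + n := by
    rw [Polynomial.natDegree_mul hQ0 (pow_ne_zero n Polynomial.X_ne_zero),
      Polynomial.natDegree_X_pow]
  have hn1 : 1 ≤ n := by
    have : Q.natDegree = R.natDegree + 1 := by
      rw [hQ, mul_comm, Polynomial.natDegree_mul_X hR]
    omega
  rw [heq, hd2] at hd1
  omega

/-- Uniqueness of the coefficient solving the invariance equation in `v·ℤ[v]`. -/
lemma coeff_unique (bar : Kv →+* Kv) (hbar : bar vv = vv⁻¹) (L0 : ℤ)
    {c c' : Kv} (hc : inVZv c) (hc' : inVZv c')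
    (h : c = (vv ^ L0 - vv ^ (-L0)) + bar c)
    (h' : c' = (vv ^ L0 - vv ^ (-L0)) + bar c') : c = c' := by
  obtain ⟨P, hP⟩ := hc
  obtain ⟨P', hP'⟩ := hc'
  have hbe : bar (c - c') = c - c' := by
    have h2 : c - c' = bar (c - c') := by
      rw [map_sub]
      conv_lhs => rw [h, h']
      ring_nf
    exact h2.symm
  set R : Polynomial ℚ := P.map (Int.castRingHom ℚ) - P'.map (Int.castRingHom ℚ) with hR
  have hcc : c - c' = algebraMap (Polynomial ℚ) Kv (Polynomial.X * R) := by
    rw [hP, hP', hR, mul_sub, map_sub]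
  have : (Polynomial.X * R).eval₂ (algebraMap ℚ Kv) vv⁻¹ =
      algebraMap (Polynomial ℚ) Kv (Polynomial.X * R) := by
    rw [← bar_alg bar hbar, ← hcc, hbe, hcc]
  have hR0 : R = 0 := key_zero R this
  have : c - c' = 0 := by rw [hcc, hR0, mul_zero, map_zero]
  exact sub_eq_zero.mp this

lemma uv_neg_ne {r : ℕ} (a : HIdx r) (ha : 0 < a.1) : a.neg ≠ a := by
  intro h
  have : a.neg.1 = a.1 := congrArg Subtype.val h
  simp only [HIdx.neg] at this
  linarith

lemma H0L_uv_pos {r : ℕ} (L0 : ℤ) (a : HIdx r) (ha : 0 < a.1) :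
    H0L r L0 (uv a) = uv a.neg := by
  unfold H0L uv
  rw [Finsupp.lift_apply, Finsupp.sum_single_index (by simp)]
  simp [ha]

/-- for `a > 0`, `β(u_a) = u_a` and
`β(u_{-a}) = u_{-a} + (v^{L_0} - v^{-L_0}) u_a`; the ı-canonical basis of `V_L` consists of the
`u_a` (`a > 0`) together with the elements `canB`, each of which is the unique `β`-invariant
element of the form `u_{-a} + (v ℤ[v])·u_a`. -/
theorem iCanonical_basis_V_even (r : ℕ) (L0 : ℤ)
    (bar : Kv →+* Kv) (hbar : bar vv = vv⁻¹)
    (β : VL r →+ VL r) (hβ : betaCondV r L0 bar β) :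
    ∀ a : HIdx r, 0 < a.1 →
      β (uv a) = uv a ∧
      β (uv a.neg) = uv a.neg + (vv ^ L0 - vv ^ (-L0)) • uv a ∧
      β (canB r L0 a) = canB r L0 a ∧
      (∃ c : Kv, inVZv c ∧ canB r L0 a = uv a.neg + c • uv a) ∧
      (∀ y : VL r, β y = y → (∃ c : Kv, inVZv c ∧ y = uv a.neg + c • uv a) →
        y = canB r L0 a) := by
  obtain ⟨hsmul, hfix, hcomm⟩ := hβ
  intro a ha
  have hfa : β (uv a) = uv a := hfix a ha
  have hH : H0L r L0 (uv a) = uv a.neg := H0L_uv_pos L0 a ha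
  have hneg : β (uv a.neg) = uv a.neg + (vv ^ L0 - vv ^ (-L0)) • uv a := by
    have h1 := hcomm (uv a)
    rw [hH, hfa] at h1
    rw [h1, LinearMap.add_apply, LinearMap.smul_apply, Module.End.one_apply, hH]
  -- the canonical coefficient
  set c₀ : Kv := if 0 < L0 then vv ^ L0 else if L0 < 0 then -vv ^ (-L0) else 0 with hc₀
  have hcanB : canB r L0 a = uv a.neg + c₀ • uv a := by
    rw [canB, hc₀]
    split_ifs with h1 h2
    · rfl
    · rw [neg_smul, sub_eq_add_neg]
    · rw [zero_smul, add_zero]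
  have hbzpow : ∀ m : ℤ, bar (vv ^ m) = vv ^ (-m) := by
    intro m
    rw [map_zpow₀, hbar, inv_zpow, ← zpow_neg]
  have hc₀eq : c₀ = (vv ^ L0 - vv ^ (-L0)) + bar c₀ := by
    rw [hc₀]
    split_ifs with h1 h2
    · rw [hbzpow]; ring
    · rw [map_neg, hbzpow, neg_neg]; ring
    · have h0 : L0 = 0 := by omega
      rw [map_zero, h0]; ring
  have hinV : inVZv c₀ := by
    rw [hc₀]
    split_ifs with h1 h2
    · refine ⟨Polynomial.X ^ (L0.toNat - 1), ?_⟩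
      rw [Polynomial.map_pow, Polynomial.map_X, ← pow_succ']
      have h2 : L0.toNat - 1 + 1 = L0.toNat := by omega
      rw [h2, map_pow, RatFunc.algebraMap_X, ← zpow_natCast, Int.toNat_of_nonneg (le_of_lt h1)]
      rfl
    · refine ⟨-Polynomial.X ^ ((-L0).toNat - 1), ?_⟩
      rw [Polynomial.map_neg, Polynomial.map_pow, Polynomial.map_X, mul_neg, map_neg,
        ← pow_succ']
      have h3 : (-L0).toNat - 1 + 1 = (-L0).toNat := by omega
      rw [h3, map_pow, RatFunc.algebraMap_X, ← zpow_natCast, Int.toNat_of_nonneg (by omega)]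
      rfl
    · exact ⟨0, by simp⟩
  have hβcan : β (canB r L0 a) = canB r L0 a := by
    rw [hcanB, map_add, hsmul, hneg, hfa, add_assoc, ← add_smul, ← hc₀eq]
  refine ⟨hfa, hneg, hβcan, ⟨c₀, hinV, hcanB⟩, ?_⟩
  rintro y hy ⟨c, hcV, rfl⟩
  -- compute β y
  have hβy : uv a.neg + ((vv ^ L0 - vv ^ (-L0)) + bar c) • uv a
      = uv a.neg + c • uv a := by
    rw [← hy, map_add, hsmul, hneg, hfa, add_assoc, ← add_smul]
  have hcoeff : (vv ^ L0 - vv ^ (-L0)) + bar c = c := by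
    have h4 := DFunLike.congr_fun hβy a
    simpa [uv, Finsupp.add_apply, Finsupp.smul_apply, Finsupp.single_eq_same,
      Finsupp.single_eq_of_ne (uv_neg_ne a ha), smul_eq_mul] using h4
  have : c = c₀ := coeff_unique bar hbar L0 hcV hinV hcoeff.symm hc₀eq
  rw [this, hcanB]
end
end

section
/- There exists a unique ℚ-algebra homomorphism ψ_ȷ : U^ȷ → U^ȷ satisfying ψ_ȷ(a·x) = bar(a)·ψ_ȷ(x) for all a ∈ K and x ∈ U^ȷ, together with ψ_ȷ(k_i) = k_i^{−1}, ψ_ȷ(e_i) = e_i, and ψ_ȷ(f_i) = f_i for all i ∈ I^ȷ. Moreover ψ_ȷ is an involution: ψ_ȷ ∘ ψ_ȷ = id. -/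
attribute [local instance] Classical.propDecidable

noncomputable section

/-- The field `ℚ(p,q)`. -/
abbrev K2 : Type := FractionRing (MvPolynomial (Fin 2) ℚ)

noncomputable def pp : K2 := algebraMap (MvPolynomial (Fin 2) ℚ) K2 (MvPolynomial.X 0)
noncomputable def qq : K2 := algebraMap (MvPolynomial (Fin 2) ℚ) K2 (MvPolynomial.X 1)

/-- Generators of `U^ȷ`: `e_i, f_i, k_i, k_i⁻¹` for `i ∈ I^ȷ = {1/2, 3/2, …, r-1/2}` (the term
`i : Fin r` encodes the index `i.val + 1/2`). -/
inductive UjGen (r : ℕ) : Type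
  | e : Fin r → UjGen r
  | f : Fin r → UjGen r
  | k : Fin r → UjGen r
  | kinv : Fin r → UjGen r

/-- The free algebra on the generators. -/
abbrev FUj (r : ℕ) : Type := FreeAlgebra K2 (UjGen r)

noncomputable def ge {r : ℕ} (i : Fin r) : FUj r := FreeAlgebra.ι K2 (UjGen.e i)
noncomputable def gf {r : ℕ} (i : Fin r) : FUj r := FreeAlgebra.ι K2 (UjGen.f i)
noncomputable def gk {r : ℕ} (i : Fin r) : FUj r := FreeAlgebra.ι K2 (UjGen.k i)
noncomputable def gkinv {r : ℕ} (i : Fin r) : FUj r := FreeAlgebra.ι K2 (UjGen.kinv i)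

/-- `c_{ij} = 2 δ_{ij} - δ_{|i-j|,1} + δ_{i,1/2} δ_{j,1/2}` (indices `i.val + 1/2`). -/
def cij {r : ℕ} (i j : Fin r) : ℤ :=
  2 * (if i = j then 1 else 0) - (if i.val + 1 = j.val ∨ j.val + 1 = i.val then 1 else 0)
    + (if i.val = 0 ∧ j.val = 0 then 1 else 0)

/-- The defining relations of `U^ȷ`. -/
inductive UjRel (r : ℕ) : FUj r → FUj r → Prop
  | kkinv (i : Fin r) : UjRel r (gk i * gkinv i) 1
  | kinvk (i : Fin r) : UjRel r (gkinv i * gk i) 1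
  | kk (i j : Fin r) : UjRel r (gk i * gk j) (gk j * gk i)
  | ke (i j : Fin r) : UjRel r (gk i * ge j) ((qq ^ cij i j) • (ge j * gk i))
  | kf (i j : Fin r) : UjRel r (gk i * gf j) ((qq ^ (-cij i j)) • (gf j * gk i))
  | ef (i j : Fin r) (h : ¬(i.val = 0 ∧ j.val = 0)) :
      UjRel r (ge i * gf j - gf j * ge i)
        (if i = j then ((qq - qq⁻¹)⁻¹) • (gk i - gkinv i) else 0)
  | ee (i j : Fin r) (h : i.val + 1 < j.val ∨ j.val + 1 < i.val) :
      UjRel r (ge i * ge j) (ge j * ge i)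
  | ff (i j : Fin r) (h : i.val + 1 < j.val ∨ j.val + 1 < i.val) :
      UjRel r (gf i * gf j) (gf j * gf i)
  | serre_e (i j : Fin r) (h : i.val + 1 = j.val ∨ j.val + 1 = i.val) :
      UjRel r (ge i * ge i * ge j + ge j * (ge i * ge i)) ((qq + qq⁻¹) • (ge i * ge j * ge i))
  | serre_f (i j : Fin r) (h : i.val + 1 = j.val ∨ j.val + 1 = i.val) :
      UjRel r (gf i * gf i * gf j + gf j * (gf i * gf i)) ((qq + qq⁻¹) • (gf i * gf j * gf i))
  | eef (i : Fin r) (h : i.val = 0) :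
      UjRel r (ge i * ge i * gf i + gf i * (ge i * ge i))
        ((qq + qq⁻¹) • (ge i * gf i * ge i
          - ge i * ((pp * qq) • gk i + (pp⁻¹ * qq⁻¹) • gkinv i)))
  | ffe (i : Fin r) (h : i.val = 0) :
      UjRel r (gf i * gf i * ge i + ge i * (gf i * gf i))
        ((qq + qq⁻¹) • (gf i * ge i * gf i
          - ((pp * qq) • gk i + (pp⁻¹ * qq⁻¹) • gkinv i) * gf i))

/-- The coideal algebra `U^ȷ`, presented by generators and relations. -/
abbrev Uj (r : ℕ) : Type := RingQuot (UjRel r)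

noncomputable def ue {r : ℕ} (i : Fin r) : Uj r := RingQuot.mkAlgHom K2 (UjRel r) (ge i)
noncomputable def uf {r : ℕ} (i : Fin r) : Uj r := RingQuot.mkAlgHom K2 (UjRel r) (gf i)
noncomputable def uk {r : ℕ} (i : Fin r) : Uj r := RingQuot.mkAlgHom K2 (UjRel r) (gk i)
noncomputable def ukinv {r : ℕ} (i : Fin r) : Uj r := RingQuot.mkAlgHom K2 (UjRel r) (gkinv i)

/-- The conditions characterizing the bar involution `ψ_ȷ` of `U^ȷ`. -/
def psijCond (r : ℕ) (bar : K2 →+* K2) (ψ : Uj r →+* Uj r) : Prop :=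
  (∀ (a : K2) (x : Uj r), ψ (a • x) = bar a • ψ x) ∧
  (∀ i : Fin r, ψ (uk i) = ukinv i) ∧
  (∀ i : Fin r, ψ (ue i) = ue i) ∧
  (∀ i : Fin r, ψ (uf i) = uf i)

namespace PsiAux

lemma qq_ne : (qq : K2) ≠ 0 := by
  simp only [qq]
  rw [map_ne_zero_iff _ (IsFractionRing.injective (MvPolynomial (Fin 2) ℚ) K2)]
  exact MvPolynomial.X_ne_zero 1

lemma K2_ext {f g : K2 →+* K2} (hp' : f pp = g pp) (hq' : f qq = g qq) : f = g := by
  apply IsLocalization.ringHom_ext (nonZeroDivisors (MvPolynomial (Fin 2) ℚ))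
  apply MvPolynomial.ringHom_ext
  · intro a
    exact RingHom.congr_fun
      (Subsingleton.elim ((f.comp (algebraMap _ K2)).comp (MvPolynomial.C : ℚ →+* _))
        ((g.comp (algebraMap _ K2)).comp (MvPolynomial.C : ℚ →+* _))) a
  · intro i
    fin_cases i
    · exact hp'
    · exact hq'

lemma barbar (bar : K2 →+* K2) (hp : bar pp = pp⁻¹) (hq : bar qq = qq⁻¹) (a : K2) :
    bar (bar a) = a := by
  have h : bar.comp bar = RingHom.id K2 := by
    apply K2_ext <;> simp [RingHom.comp_apply, hp, hq, map_inv₀, inv_inv]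
  exact RingHom.congr_fun h a

variable {r : ℕ}

lemma urel {x y : FUj r} (h : UjRel r x y) :
    RingQuot.mkAlgHom K2 (UjRel r) x = RingQuot.mkAlgHom K2 (UjRel r) y :=
  RingQuot.mkAlgHom_rel K2 h

lemma ukv (i : Fin r) : uk i * ukinv i = 1 := by
  simpa only [ue, uf, uk, ukinv, map_mul, map_one] using urel (UjRel.kkinv i)

lemma vku (i : Fin r) : ukinv i * uk i = 1 := by
  simpa only [ue, uf, uk, ukinv, map_mul, map_one] using urel (UjRel.kinvk i)

lemma rkk (i j : Fin r) : uk i * uk j = uk j * uk i := by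
  simpa only [ue, uf, uk, ukinv, map_mul] using urel (UjRel.kk i j)

lemma rke (i j : Fin r) : uk i * ue j = (qq ^ cij i j) • (ue j * uk i) := by
  simpa only [ue, uf, uk, ukinv, map_mul, map_smul] using urel (UjRel.ke i j)

lemma rkf (i j : Fin r) : uk i * uf j = (qq ^ (-cij i j)) • (uf j * uk i) := by
  simpa only [ue, uf, uk, ukinv, map_mul, map_smul] using urel (UjRel.kf i j)

lemma ref (i j : Fin r) (h : ¬(i.val = 0 ∧ j.val = 0)) :
    ue i * uf j - uf j * ue i
      = if i = j then ((qq - qq⁻¹)⁻¹) • (uk i - ukinv i) else 0 := by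
  simpa only [ue, uf, uk, ukinv, map_mul, map_smul, map_sub, map_zero, apply_ite] using urel (UjRel.ef i j h)

lemma ree (i j : Fin r) (h : i.val + 1 < j.val ∨ j.val + 1 < i.val) :
    ue i * ue j = ue j * ue i := by
  simpa only [ue, uf, uk, ukinv, map_mul] using urel (UjRel.ee i j h)

lemma rff (i j : Fin r) (h : i.val + 1 < j.val ∨ j.val + 1 < i.val) :
    uf i * uf j = uf j * uf i := by
  simpa only [ue, uf, uk, ukinv, map_mul] using urel (UjRel.ff i j h)

lemma rse (i j : Fin r) (h : i.val + 1 = j.val ∨ j.val + 1 = i.val) :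
    ue i * ue i * ue j + ue j * (ue i * ue i) = (qq + qq⁻¹) • (ue i * ue j * ue i) := by
  simpa only [ue, uf, uk, ukinv, map_mul, map_add, map_smul] using urel (UjRel.serre_e i j h)

lemma rsf (i j : Fin r) (h : i.val + 1 = j.val ∨ j.val + 1 = i.val) :
    uf i * uf i * uf j + uf j * (uf i * uf i) = (qq + qq⁻¹) • (uf i * uf j * uf i) := by
  simpa only [ue, uf, uk, ukinv, map_mul, map_add, map_smul] using urel (UjRel.serre_f i j h)

lemma reef (i : Fin r) (h : i.val = 0) :
    ue i * ue i * uf i + uf i * (ue i * ue i)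
      = (qq + qq⁻¹) • (ue i * uf i * ue i
          - ue i * ((pp * qq) • uk i + (pp⁻¹ * qq⁻¹) • ukinv i)) := by
  simpa only [ue, uf, uk, ukinv, map_mul, map_add, map_smul, map_sub] using urel (UjRel.eef i h)

lemma rffe (i : Fin r) (h : i.val = 0) :
    uf i * uf i * ue i + ue i * (uf i * uf i)
      = (qq + qq⁻¹) • (uf i * ue i * uf i
          - ((pp * qq) • uk i + (pp⁻¹ * qq⁻¹) • ukinv i) * uf i) := by
  simpa only [ue, uf, uk, ukinv, map_mul, map_add, map_smul, map_sub] using urel (UjRel.ffe i h)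

lemma vku' (i : Fin r) (x : Uj r) : ukinv i * (uk i * x) = x := by
  rw [← mul_assoc, vku, one_mul]

lemma ukv' (i : Fin r) (x : Uj r) : uk i * (ukinv i * x) = x := by
  rw [← mul_assoc, ukv, one_mul]

lemma k_cancel (i : Fin r) {x y : Uj r} (h : uk i * x = uk i * y) : x = y := by
  have h2 := congrArg (fun z => ukinv i * z) h
  simpa only [vku'] using h2

lemma vkv_comm (i j : Fin r) : ukinv i * ukinv j = ukinv j * ukinv i := by
  have h1 : (ukinv i * ukinv j) * (uk j * uk i) = 1 := by
    rw [mul_assoc, vku' j, vku]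
  have h4 : (uk j * uk i) * (ukinv j * ukinv i) = 1 := by
    rw [rkk j i, mul_assoc, ukv' j, ukv]
  exact left_inv_eq_right_inv h1 h4

lemma conj (i : Fin r) (x : Uj r) (c : ℤ) (h : uk i * x = (qq ^ c) • (x * uk i)) :
    ukinv i * x = (qq ^ (-c)) • (x * ukinv i) := by
  apply k_cancel i
  rw [ukv', mul_smul_comm, ← mul_assoc, h, smul_mul_assoc, mul_assoc, ukv, mul_one,
    smul_smul, ← zpow_add₀ qq_ne, neg_add_cancel, zpow_zero, one_smul]

lemma vke (i j : Fin r) : ukinv i * ue j = (qq ^ (-cij i j)) • (ue j * ukinv i) :=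
  conj i (ue j) (cij i j) (rke i j)

lemma vkf (i j : Fin r) : ukinv i * uf j = (qq ^ (-(-cij i j))) • (uf j * ukinv i) :=
  conj i (uf j) (-cij i j) (rkf i j)


noncomputable def phiGen (r : ℕ) : UjGen r → Uj r
  | .e i => ue i
  | .f i => uf i
  | .k i => ukinv i
  | .kinv i => uk i

noncomputable def twisted (r : ℕ) (bar : K2 →+* K2) : Algebra K2 (Uj r) :=
  RingHom.toAlgebra' ((algebraMap K2 (Uj r)).comp bar)
    (fun c x => Algebra.commutes (bar c) x)

noncomputable def Phi (r : ℕ) (bar : K2 →+* K2) : FUj r →+* Uj r :=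
  letI : Algebra K2 (Uj r) := twisted r bar
  (FreeAlgebra.lift K2 (phiGen r)).toRingHom

variable (bar : K2 →+* K2)

lemma Phi_ι (g : UjGen r) : Phi r bar (FreeAlgebra.ι K2 g) = phiGen r g := by
  letI : Algebra K2 (Uj r) := twisted r bar
  exact FreeAlgebra.lift_ι_apply _ _

lemma Phi_e (i : Fin r) : Phi r bar (ge i) = ue i := Phi_ι bar (UjGen.e i)
lemma Phi_f (i : Fin r) : Phi r bar (gf i) = uf i := Phi_ι bar (UjGen.f i)
lemma Phi_k (i : Fin r) : Phi r bar (gk i) = ukinv i := Phi_ι bar (UjGen.k i)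
lemma Phi_kinv (i : Fin r) : Phi r bar (gkinv i) = uk i := Phi_ι bar (UjGen.kinv i)

lemma Phi_alg (a : K2) :
    Phi r bar (algebraMap K2 (FUj r) a) = algebraMap K2 (Uj r) (bar a) := by
  letI : Algebra K2 (Uj r) := twisted r bar
  exact (FreeAlgebra.lift K2 (phiGen r)).commutes a

lemma Phi_smul (a : K2) (x : FUj r) : Phi r bar (a • x) = bar a • Phi r bar x := by
  rw [Algebra.smul_def, map_mul, Phi_alg, ← Algebra.smul_def]


lemma Phi_rel (hp : bar pp = pp⁻¹) (hq : bar qq = qq⁻¹) :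
    ∀ ⦃x y : FUj r⦄, UjRel r x y → Phi r bar x = Phi r bar y := by
  intro x y h
  cases h with
  | kkinv i => simp only [map_mul, map_one, Phi_k, Phi_kinv]; exact vku i
  | kinvk i => simp only [map_mul, map_one, Phi_k, Phi_kinv]; exact ukv i
  | kk i j => simp only [map_mul, Phi_k]; exact vkv_comm i j
  | ke i j =>
      simp only [map_mul, Phi_smul, Phi_k, Phi_e, map_zpow₀, hq, inv_zpow, ← zpow_neg]
      exact vke i j
  | kf i j =>
      simp only [map_mul, Phi_smul, Phi_k, Phi_f, map_zpow₀, hq, inv_zpow, ← zpow_neg]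
      exact vkf i j
  | ef i j h =>
      simp only [map_sub, map_mul, Phi_e, Phi_f, apply_ite (Phi r bar), map_zero,
        Phi_smul, Phi_k, Phi_kinv, map_inv₀, map_sub, hq, inv_inv]
      rw [ref i j h]
      by_cases hij : i = j
      · rw [if_pos hij, if_pos hij, ← neg_sub qq qq⁻¹, inv_neg,
          ← neg_sub (ukinv i) (uk i), smul_neg]
        exact (neg_smul ((qq - qq⁻¹)⁻¹) (ukinv i - uk i)).symm
      · rw [if_neg hij, if_neg hij]
  | ee i j h => simp only [map_mul, Phi_e]; exact ree i j h
  | ff i j h => simp only [map_mul, Phi_f]; exact rff i j h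
  | serre_e i j h =>
      simp only [map_add, map_mul, Phi_e, Phi_smul, map_inv₀, hq, inv_inv]
      rw [add_comm (qq⁻¹) qq]
      exact rse i j h
  | serre_f i j h =>
      simp only [map_add, map_mul, Phi_f, Phi_smul, map_inv₀, hq, inv_inv]
      rw [add_comm (qq⁻¹) qq]
      exact rsf i j h
  | eef i h =>
      simp only [map_add, map_mul, map_sub, Phi_e, Phi_f, Phi_k, Phi_kinv, Phi_smul,
        map_inv₀, hp, hq, inv_inv]
      rw [add_comm (qq⁻¹) qq, add_comm ((pp⁻¹ * qq⁻¹) • ukinv i) ((pp * qq) • uk i)]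
      exact reef i h
  | ffe i h =>
      simp only [map_add, map_mul, map_sub, Phi_e, Phi_f, Phi_k, Phi_kinv, Phi_smul,
        map_inv₀, hp, hq, inv_inv]
      rw [add_comm (qq⁻¹) qq, add_comm ((pp⁻¹ * qq⁻¹) • ukinv i) ((pp * qq) • uk i)]
      exact rffe i h

noncomputable def psic (r : ℕ) (bar : K2 →+* K2) (hp : bar pp = pp⁻¹)
    (hq : bar qq = qq⁻¹) : Uj r →+* Uj r :=
  RingQuot.lift ⟨Phi r bar, Phi_rel bar hp hq⟩

lemma mk_eq (x : FUj r) :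
    RingQuot.mkAlgHom K2 (UjRel r) x = RingQuot.mkRingHom (UjRel r) x := by
  rw [← RingQuot.mkAlgHom_coe K2 (UjRel r)]; rfl

lemma psic_mk (hp : bar pp = pp⁻¹) (hq : bar qq = qq⁻¹) (x : FUj r) :
    psic r bar hp hq (RingQuot.mkAlgHom K2 (UjRel r) x) = Phi r bar x := by
  rw [mk_eq]
  exact RingQuot.lift_mkRingHom_apply (Phi r bar) (Phi_rel bar hp hq) x

lemma psic_cond (hp : bar pp = pp⁻¹) (hq : bar qq = qq⁻¹) :
    psijCond r bar (psic r bar hp hq) := by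
  refine ⟨?_, fun i => ?_, fun i => ?_, fun i => ?_⟩
  · intro a x
    obtain ⟨y, rfl⟩ := RingQuot.mkAlgHom_surjective K2 (UjRel r) x
    have hs : a • RingQuot.mkAlgHom K2 (UjRel r) y
        = RingQuot.mkAlgHom K2 (UjRel r) (a • y) := (map_smul _ a y).symm
    rw [hs, psic_mk bar hp hq, psic_mk bar hp hq, Phi_smul]
  · exact (psic_mk bar hp hq (gk i)).trans (Phi_k bar i)
  · exact (psic_mk bar hp hq (ge i)).trans (Phi_e bar i)
  · exact (psic_mk bar hp hq (gf i)).trans (Phi_f bar i)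

lemma cond_ukinv {ψ : Uj r →+* Uj r} (h : psijCond r bar ψ) (i : Fin r) :
    ψ (ukinv i) = uk i := by
  have h1 : ψ (ukinv i) * ukinv i = 1 := by
    have h2 := congrArg ψ (vku i)
    rw [map_mul, map_one, h.2.1] at h2
    exact h2
  exact left_inv_eq_right_inv h1 (vku i)

lemma cond_mk {ψ : Uj r →+* Uj r} (h : psijCond r bar ψ) (y : FUj r) :
    ψ (RingQuot.mkAlgHom K2 (UjRel r) y) = Phi r bar y := by
  induction y using FreeAlgebra.induction with
  | grade0 a =>
      rw [AlgHom.commutes, Phi_alg, Algebra.algebraMap_eq_smul_one, h.1, map_one]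
      exact (Algebra.algebraMap_eq_smul_one (bar a)).symm
  | grade1 g =>
      cases g with
      | e i => exact (h.2.2.1 i).trans (Phi_e bar i).symm
      | f i => exact (h.2.2.2 i).trans (Phi_f bar i).symm
      | k i => exact (h.2.1 i).trans (Phi_k bar i).symm
      | kinv i => exact (cond_ukinv bar h i).trans (Phi_kinv bar i).symm
  | mul a b ha hb => rw [map_mul, map_mul, map_mul, ha, hb]
  | add a b ha hb => rw [map_add, map_add, map_add, ha, hb]

lemma cond_unique {ψ₁ ψ₂ : Uj r →+* Uj r} (h₁ : psijCond r bar ψ₁)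
    (h₂ : psijCond r bar ψ₂) : ψ₁ = ψ₂ := by
  apply RingHom.ext; intro x
  obtain ⟨y, rfl⟩ := RingQuot.mkAlgHom_surjective K2 (UjRel r) x
  rw [cond_mk bar h₁ y, cond_mk bar h₂ y]

lemma cond_invol (hp : bar pp = pp⁻¹) (hq : bar qq = qq⁻¹) {ψ : Uj r →+* Uj r}
    (h : psijCond r bar ψ) (x : Uj r) : ψ (ψ x) = x := by
  obtain ⟨y, rfl⟩ := RingQuot.mkAlgHom_surjective K2 (UjRel r) x
  induction y using FreeAlgebra.induction with
  | grade0 a =>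
      rw [AlgHom.commutes, Algebra.algebraMap_eq_smul_one, h.1, map_one, h.1, map_one,
        barbar bar hp hq]
  | grade1 g =>
      cases g with
      | e i => show ψ (ψ (ue i)) = ue i; rw [h.2.2.1, h.2.2.1]
      | f i => show ψ (ψ (uf i)) = uf i; rw [h.2.2.2, h.2.2.2]
      | k i => show ψ (ψ (uk i)) = uk i; rw [h.2.1, cond_ukinv bar h]
      | kinv i => show ψ (ψ (ukinv i)) = ukinv i; rw [cond_ukinv bar h, h.2.1]
  | mul a b ha hb => rw [map_mul, map_mul, map_mul, ha, hb]
  | add a b ha hb => rw [map_add, map_add, map_add, ha, hb]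

end PsiAux

/-- there is a unique `ℚ`-algebra homomorphism `ψ_ȷ : U^ȷ → U^ȷ` which is
`bar`-semilinear, fixes the `e_i, f_i` and sends `k_i ↦ k_i⁻¹`; moreover it is an involution. -/
theorem psi_j_exists_unique (r : ℕ) (hr : 1 ≤ r) (bar : K2 →+* K2)
    (hp : bar pp = pp⁻¹) (hq : bar qq = qq⁻¹) :
    (∃! ψ : Uj r →+* Uj r, psijCond r bar ψ) ∧
    (∀ ψ : Uj r →+* Uj r, psijCond r bar ψ → ∀ x : Uj r, ψ (ψ x) = x) := by
  constructor
  · exact ⟨PsiAux.psic r bar hp hq, PsiAux.psic_cond bar hp hq,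
      fun ψ' h' => PsiAux.cond_unique bar h' (PsiAux.psic_cond bar hp hq)⟩
  · exact fun ψ h => PsiAux.cond_invol bar hp hq h
end
end
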